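/- arXiv:1804.04702 — 3 statements merged into one kernel-verified Lean document; each statement's English description precedes it below -/
import Mathlib

section
/- For partitions λ of n with m parts and μ of n with ℓ parts, the set of m×ℓ matrices of non-negative integers whose i-th row sums to λ_i and whose j-th column sums to μ_j is in bijection with the double cosets S_λ\S_n/S_μ of the corresponding Young subgroups in the symmetric group S_n. -/
/-- The Young subgroup attached to a block function `f : Fin n → Fin m`
(encoding an ordered set partition of `{1,...,n}`): permutations preserving
each block, i.e. `f ∘ σ = f`. -/
def youngSubgroup {n m : ℕ} (f : Fin n → Fin m) : Subgroup (Equiv.Perm (Fin n)) where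
  carrier := {σ | ∀ x, f (σ x) = f x}
  one_mem' := fun _ => rfl
  mul_mem' := by
    intro σ τ hσ hτ x
    rw [Equiv.Perm.mul_apply, hσ, hτ]
  inv_mem' := by
    intro σ hσ x
    simpa using (hσ (σ⁻¹ x)).symm

open Finset

/-- Fiber of `Sigma.fst` is equivalent to the corresponding summand. -/
def sigmaFstFiber {X : Type*} (β : X → Type*) (x : X) :
    {s : Σ a, β a // s.1 = x} ≃ β x where
  toFun s := s.2 ▸ s.1.2
  invFun b := ⟨⟨x, b⟩, rfl⟩
  left_inv := by rintro ⟨⟨a, b⟩, rfl⟩; rfl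
  right_inv b := rfl

/-- There exists a function with prescribed fiber cardinalities. -/
lemma existsFunWithFibers {n : ℕ} {X : Type*} [DecidableEq X] [Fintype X]
    (c : X → ℕ) (hc : ∑ x, c x = n) :
    ∃ p : Fin n → X, ∀ x, (univ.filter fun y => p y = x).card = c x := by
  have hcard : Fintype.card (Fin n) = Fintype.card (Σ x, Fin (c x)) := by
    simp [hc]
  obtain ⟨e⟩ := Fintype.card_eq.mp hcard
  refine ⟨fun y => (e y).1, fun x => ?_⟩
  have h1 : (univ.filter fun y => (e y).1 = x).card
      = (univ.filter fun s : Σ a, Fin (c a) => s.1 = x).card := by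
    apply Finset.card_equiv e
    intro y
    simp
  rw [h1, ← Fintype.card_subtype]
  rw [Fintype.card_congr (sigmaFstFiber (fun a => Fin (c a)) x)]
  simp

/-- Two functions with equal fiber cardinalities are intertwined by a permutation. -/
lemma matchFibers {n : ℕ} {X : Type*} [DecidableEq X] [Fintype X]
    (F G : Fin n → X)
    (h : ∀ x, (univ.filter fun y => F y = x).card = (univ.filter fun y => G y = x).card) :
    ∃ σ : Equiv.Perm (Fin n), ∀ y, F (σ y) = G y := by
  have e : ∀ x, { a // G a = x } ≃ { a // F a = x } := fun x => by
    apply Fintype.equivOfCardEq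
    rw [Fintype.card_subtype, Fintype.card_subtype, h x]
  exact ⟨Equiv.ofFiberEquiv e, fun y => Equiv.ofFiberEquiv_map e y⟩

/-- For partitions `λ` of `n` with `m` parts and `μ` of `n` with `ℓ` parts
(presented via block functions `f`, `g` with fiber sizes `λ`, `μ`), the set of
`m × ℓ` matrices of non-negative integers with row sums `λ` and column sums `μ`
is in bijection with the double cosets `S_λ \ S_n / S_μ`. -/
theorem stmt4 (n m ℓ : ℕ) (lam : Fin m → ℕ) (mu : Fin ℓ → ℕ)
    (hlam : ∑ i, lam i = n) (hmu : ∑ j, mu j = n)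
    (f : Fin n → Fin m) (g : Fin n → Fin ℓ)
    (hf : ∀ i, (Finset.univ.filter fun x => f x = i).card = lam i)
    (hg : ∀ j, (Finset.univ.filter fun x => g x = j).card = mu j) :
    Nonempty
      ({M : Fin m → Fin ℓ → ℕ //
          (∀ i, ∑ j, M i j = lam i) ∧ (∀ j, ∑ i, M i j = mu j)} ≃
        DoubleCoset.Quotient (↑(youngSubgroup f) : Set (Equiv.Perm (Fin n)))
          (↑(youngSubgroup g) : Set (Equiv.Perm (Fin n)))) := by
  classical
  set N : Equiv.Perm (Fin n) → Fin m → Fin ℓ → ℕ := fun σ i j =>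
    (univ.filter fun y => f (σ y) = i ∧ g y = j).card with hNdef
  -- row sums
  have hrow : ∀ σ i, ∑ j, N σ i j = lam i := by
    intro σ i
    have h1 : (univ.filter fun y => f (σ y) = i).card = ∑ j, N σ i j := by
      rw [Finset.card_eq_sum_card_fiberwise (f := g) (t := univ) (fun x _ => mem_univ _)]
      simp [hNdef, Finset.filter_filter]
    rw [← h1, ← hf i]
    apply Finset.card_equiv σ
    intro x
    simp
  have hcol : ∀ σ j, ∑ i, N σ i j = mu j := by
    intro σ j
    have h1 : (univ.filter fun y => g y = j).card = ∑ i, N σ i j := by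
      rw [Finset.card_eq_sum_card_fiberwise (f := fun y => f (σ y)) (t := univ)
        (fun x _ => mem_univ _)]
      refine Finset.sum_congr rfl fun i _ => ?_
      rw [Finset.filter_filter]
      simp [hNdef, and_comm]
    rw [← h1, hg j]
  -- invariance under the double coset relation
  have hinv : ∀ (σ a b : Equiv.Perm (Fin n)), a ∈ youngSubgroup f → b ∈ youngSubgroup g →
      N (a * σ * b) = N σ := by
    intro σ a b ha hb
    funext i j
    simp only [hNdef]
    apply Finset.card_equiv b
    intro x
    rw [Finset.mem_filter, Finset.mem_filter]
    simp only [Finset.mem_univ, true_and, Equiv.Perm.mul_apply]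
    rw [ha (σ (b x)), hb x]
  -- injectivity on double cosets
  have hinj : ∀ σ τ : Equiv.Perm (Fin n), N σ = N τ →
      ∃ a ∈ youngSubgroup f, ∃ b ∈ youngSubgroup g, τ = a * σ * b := by
    intro σ τ hN
    obtain ⟨b, hb⟩ := matchFibers (n := n) (X := Fin m × Fin ℓ)
      (fun y => (f (σ y), g y)) (fun y => (f (τ y), g y)) (by
        rintro ⟨i, j⟩
        have := congrFun (congrFun hN i) j
        simpa [hNdef, Prod.ext_iff] using this)
    have hb1 : ∀ y, f (σ (b y)) = f (τ y) := fun y => (Prod.ext_iff.mp (hb y)).1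
    have hb2 : ∀ y, g (b y) = g y := fun y => (Prod.ext_iff.mp (hb y)).2
    refine ⟨τ * b⁻¹ * σ⁻¹, ?_, b, hb2, by group⟩
    intro x
    simp only [Equiv.Perm.mul_apply]
    rw [← hb1 (b⁻¹ (σ⁻¹ x))]
    simp only [Equiv.Perm.inv_def, Equiv.apply_symm_apply]
  -- surjectivity onto matrices
  have hsurj : ∀ M : Fin m → Fin ℓ → ℕ, (∀ i, ∑ j, M i j = lam i) →
      (∀ j, ∑ i, M i j = mu j) → ∃ σ, N σ = M := by
    intro M hMr hMc
    obtain ⟨p, hp⟩ := existsFunWithFibers (n := n) (X := Fin m × Fin ℓ)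
      (fun x => M x.1 x.2) (by
        rw [Fintype.sum_prod_type]
        simp only [hMr]
        exact hlam)
    have hfib1 : ∀ i, (univ.filter fun y => f y = i).card
        = (univ.filter fun y => (p y).1 = i).card := by
      intro i
      rw [hf i, Finset.card_eq_sum_card_fiberwise (f := fun y => (p y).2) (t := univ)
        (fun x _ => mem_univ _), ← hMr i]
      refine Finset.sum_congr rfl fun j _ => ?_
      rw [Finset.filter_filter, ← hp (i, j)]
      apply Finset.card_nbij' id id <;> simp +contextual [Prod.ext_iff, Set.RightInvOn, Set.LeftInvOn, Set.MapsTo]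
    have hfib2 : ∀ j, (univ.filter fun y => g y = j).card
        = (univ.filter fun y => (p y).2 = j).card := by
      intro j
      rw [hg j, Finset.card_eq_sum_card_fiberwise (f := fun y => (p y).1) (t := univ)
        (fun x _ => mem_univ _), ← hMc j]
      refine Finset.sum_congr rfl fun i _ => ?_
      rw [Finset.filter_filter, ← hp (i, j)]
      apply Finset.card_nbij' id id <;> simp +contextual [Prod.ext_iff, and_comm, Set.RightInvOn, Set.LeftInvOn, Set.MapsTo]
    obtain ⟨σ1, hσ1⟩ := matchFibers f (fun y => (p y).1) hfib1
    obtain ⟨σ2, hσ2⟩ := matchFibers g (fun y => (p y).2) hfib2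
    refine ⟨σ1 * σ2⁻¹, ?_⟩
    funext i j
    simp only [hNdef]
    rw [← hp (i, j)]
    refine (Finset.card_equiv σ2 ?_).symm
    intro z
    simp only [Finset.mem_filter, Finset.mem_univ, true_and, Equiv.Perm.mul_apply,
      Prod.ext_iff, Equiv.Perm.inv_def, Equiv.symm_apply_apply, hσ1, hσ2]
  -- assemble the bijection
  set H := youngSubgroup f
  set K := youngSubgroup g
  let T := {M : Fin m → Fin ℓ → ℕ //
      (∀ i, ∑ j, M i j = lam i) ∧ (∀ j, ∑ i, M i j = mu j)}
  let Φ : Equiv.Perm (Fin n) → T := fun σ => ⟨N σ, fun i => hrow σ i, fun j => hcol σ j⟩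
  have hΦ : ∀ σ τ : Equiv.Perm (Fin n), DoubleCoset.setoid (↑H) (↑K) σ τ → Φ σ = Φ τ := by
    intro σ τ hrel
    obtain ⟨a, ha, b, hb, rfl⟩ := DoubleCoset.rel_iff.mp hrel
    exact Subtype.ext (hinv σ a b ha hb).symm
  let Ψ : DoubleCoset.Quotient (↑H : Set (Equiv.Perm (Fin n))) (↑K) → T :=
    Quotient.lift Φ hΦ
  have hbij : Function.Bijective Ψ := by
    constructor
    · intro q1 q2 h
      induction q1 using Quotient.inductionOn' with | h σ =>
      induction q2 using Quotient.inductionOn' with | h τ =>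
      have hN : N σ = N τ := congrArg Subtype.val h
      obtain ⟨a, ha, b, hb, hab⟩ := hinj σ τ hN
      exact Quotient.sound' (DoubleCoset.rel_iff.mpr ⟨a, ha, b, hb, hab⟩)
    · rintro ⟨M, hMr, hMc⟩
      obtain ⟨σ, hσ⟩ := hsurj M hMr hMc
      exact ⟨Quotient.mk'' σ, Subtype.ext hσ⟩
  exact ⟨(Equiv.ofBijective Ψ hbij).symm⟩
end

section
/- For n ≥ m, the dimension of the space of S_n-invariants in V^{⊗m} equals the Bell number B_m, the number of set partitions of an m-element set. -/
open Function

/-- Two injections of a finite type into `Fin n` differ by a permutation. -/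
lemma exists_perm_comp {α : Type*} [Fintype α] {n : ℕ} (f g : α → Fin n)
    (hf : Injective f) (hg : Injective g) :
    ∃ σ : Equiv.Perm (Fin n), ∀ a, σ (f a) = g a := by
  classical
  have hcard : Fintype.card (↥(Set.range f)ᶜ) = Fintype.card (↥(Set.range g)ᶜ) := by
    rw [Fintype.card_compl_set, Fintype.card_compl_set,
      Set.card_range_of_injective hf, Set.card_range_of_injective hg]
  let e : Set.range f ≃ Set.range g := (Equiv.ofInjective f hf).symm.trans (Equiv.ofInjective g hg)
  let ec : (↥(Set.range f)ᶜ) ≃ (↥(Set.range g)ᶜ) := Fintype.equivOfCardEq hcard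
  refine ⟨(Equiv.Set.sumCompl (Set.range f)).symm.trans
    ((e.sumCongr ec).trans (Equiv.Set.sumCompl (Set.range g))), fun a => ?_⟩
  have h1 : (Equiv.Set.sumCompl (Set.range f)).symm (f a) = (Sum.inl ⟨f a, a, rfl⟩ : Set.range f ⊕ (↥(Set.range f)ᶜ)) :=
    Equiv.Set.sumCompl_symm_apply_of_mem (Set.mem_range_self a)
  simp only [Equiv.trans_apply, h1, Equiv.sumCongr_apply, Sum.map_inl]
  have h2 : e ⟨f a, a, rfl⟩ = ⟨g a, a, rfl⟩ := by
    simp only [e, Equiv.trans_apply]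
    have : (⟨f a, a, rfl⟩ : Set.range f) = Equiv.ofInjective f hf a := rfl
    rw [this, Equiv.symm_apply_apply]
    rfl
  rw [h2, Equiv.Set.sumCompl_apply_inl]

lemma ker_perm_comp {n m : ℕ} (σ : Equiv.Perm (Fin n)) (w : Fin m → Fin n) :
    Setoid.ker (σ ∘ w) = Setoid.ker w := by
  apply Setoid.ext
  intro i j
  exact ⟨fun h => σ.injective h, fun h => congrArg σ h⟩

lemma exists_ker_eq {n m : ℕ} (h : m ≤ n) (s : Setoid (Fin m)) :
    ∃ w : Fin m → Fin n, Setoid.ker w = s := by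
  classical
  haveI : Fintype (Quotient s) := Fintype.ofFinite _
  have hc : Fintype.card (Quotient s) ≤ n := by
    calc Fintype.card (Quotient s) ≤ Fintype.card (Fin m) :=
          Fintype.card_le_of_surjective _ Quotient.exists_rep
      _ = m := Fintype.card_fin m
      _ ≤ n := h
  obtain ⟨q⟩ := Function.Embedding.nonempty_of_card_le (by simpa using hc :
    Fintype.card (Quotient s) ≤ Fintype.card (Fin n))
  refine ⟨fun i => q (Quotient.mk s i), ?_⟩
  apply Setoid.ext
  intro i j
  constructor
  · intro hij
    exact Quotient.eq'.mp (q.injective hij)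
  · intro hij
    exact congrArg q (Quotient.sound hij)

lemma exists_perm_of_ker_eq {n m : ℕ} {w w' : Fin m → Fin n}
    (hk : Setoid.ker w = Setoid.ker w') :
    ∃ σ : Equiv.Perm (Fin n), σ ∘ w = w' := by
  classical
  haveI : Fintype (Quotient (Setoid.ker w)) := Fintype.ofFinite _
  let f : Quotient (Setoid.ker w) → Fin n :=
    Quotient.lift w (fun _ _ h => h)
  let g : Quotient (Setoid.ker w) → Fin n :=
    Quotient.lift w' (fun a b hab => by
      have : Setoid.ker w' a b := hk ▸ hab
      exact this)
  have hf : Function.Injective f := Setoid.kerLift_injective w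
  have hg : Function.Injective g := by
    intro x y
    induction x using Quotient.ind
    induction y using Quotient.ind
    intro hxy
    exact Quotient.sound (show Setoid.ker w _ _ from hk ▸ (hxy : Setoid.ker w' _ _))
  obtain ⟨σ, hσ⟩ := exists_perm_comp f g hf hg
  exact ⟨σ, funext fun i => hσ (Quotient.mk _ i)⟩

/-- The space of `S_n`-invariants in `V^{⊗m}`, where `V = ℂ^n` is the
permutation representation of `S_n`:  `V^{⊗m}` is realized as functions on its
basis of simple tensors indexed by `w : Fin m → Fin n`, with the diagonal
action `w ↦ σ ∘ w`. -/
noncomputable def tensorInvariants (n m : ℕ) : Submodule ℂ ((Fin m → Fin n) → ℂ) where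
  carrier := {v | ∀ σ : Equiv.Perm (Fin n), ∀ w : Fin m → Fin n, v (σ ∘ w) = v w}
  add_mem' := by
    intro u v hu hv σ w
    simp only [Pi.add_apply, hu σ w, hv σ w]
  zero_mem' := fun _ _ => rfl
  smul_mem' := by
    intro c v hv σ w
    simp only [Pi.smul_apply, hv σ w]

/-- For `n ≥ m`, the dimension of the space of `S_n`-invariants in `V^{⊗m}`
equals the Bell number `B_m`, i.e. the number of set partitions of an
`m`-element set (encoded as equivalence relations on `Fin m`). -/
theorem stmt9 (n m : ℕ) (h : n ≥ m) :
    Module.finrank ℂ (tensorInvariants n m) = Nat.card (Setoid (Fin m)) := by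
  classical
  haveI : Finite (Setoid (Fin m)) := by
    refine Finite.of_injective (fun s : Setoid (Fin m) => s.r) ?_
    intro s t hst
    apply Setoid.ext
    intro a b
    rw [show s.r = t.r from hst]
  haveI : Fintype (Setoid (Fin m)) := Fintype.ofFinite _
  choose sec hsec using exists_ker_eq (n := n) (m := m) h
  let Φ : (Setoid (Fin m) → ℂ) →ₗ[ℂ] tensorInvariants n m :=
    { toFun := fun f => ⟨fun w => f (Setoid.ker w), fun σ w => by
        simp [ker_perm_comp σ w]⟩
      map_add' := fun f g => rfl
      map_smul' := fun c f => rfl }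
  have hbij : Function.Bijective Φ := by
    constructor
    · intro f g hfg
      funext s
      have := congrArg (fun vv => (vv : tensorInvariants n m).1 (sec s)) hfg
      simpa [Φ, hsec s] using this
    · rintro ⟨v, hv⟩
      refine ⟨fun s => v (sec s), Subtype.ext (funext fun w => ?_)⟩
      show v (sec (Setoid.ker w)) = v w
      obtain ⟨σ, hσ⟩ := exists_perm_of_ker_eq (hsec (Setoid.ker w))
      conv_rhs => rw [← hσ]
      exact (hv σ _).symm
  have he := (LinearEquiv.ofBijective Φ hbij).finrank_eq
  rw [← he, Module.finrank_fintype_fun_eq_card, Nat.card_eq_fintype_card]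
end

section
/- For general n, the dimension of the space of S_n-invariants in Sym^{k_1}(V) ⊗ ... ⊗ Sym^{k_m}(V), where V is the n-dimensional permutation representation of S_n, equals the number of multiset partitions of {1^{k_1}, ..., m^{k_m}} into at most n parts. -/
/-- The basis of `Sym^{k_1}(V) ⊗ ... ⊗ Sym^{k_m}(V)` for `V = ℂ^n`: an
`m`-tuple of monomials, the `j`-th being a monomial of total degree `k_j` in
`n` variables, recorded by its exponent vector. -/
def SymBasis (n m : ℕ) (k : Fin m → ℕ) : Type :=
  ∀ j : Fin m, {d : Fin n → ℕ // ∑ x, d x = k j}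

/-- The space of `S_n`-invariants in `Sym^{k_1}(V) ⊗ ... ⊗ Sym^{k_m}(V)`,
realized as functions on the monomial basis, where `σ ∈ S_n` acts diagonally by
permuting the variables in each exponent vector. -/
noncomputable def symInvariants (n m : ℕ) (k : Fin m → ℕ) :
    Submodule ℂ (SymBasis n m k → ℂ) where
  carrier := {v | ∀ σ : Equiv.Perm (Fin n), ∀ p q : SymBasis n m k,
    (∀ j, (q j).1 = (p j).1 ∘ σ) → v q = v p}
  add_mem' := by
    intro u v hu hv σ p q h
    simp only [Pi.add_apply, hu σ p q h, hv σ p q h]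
  zero_mem' := fun _ _ _ _ => rfl
  smul_mem' := by
    intro c v hv σ p q h
    simp only [Pi.smul_apply, hv σ p q h]

/-- The multiset `{1^{k_1}, 2^{k_2}, ..., m^{k_m}}` on `Fin m`. -/
def theMultiset (m : ℕ) (k : Fin m → ℕ) : Multiset (Fin m) :=
  ∑ j, Multiset.replicate (k j) j

namespace Stmt11Aux
open Multiset

variable {n m : ℕ} {k : Fin m → ℕ}

instance : Finite (SymBasis n m k) := by
  have h : ∀ j : Fin m, Finite {d : Fin n → ℕ // ∑ x, d x = k j} := by
    intro j
    apply Finite.of_injective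
      (fun d : {d : Fin n → ℕ // ∑ x, d x = k j} =>
        (fun x => (⟨d.1 x, Nat.lt_succ_of_le (le_of_le_of_eq
          (Finset.single_le_sum (fun _ _ => Nat.zero_le _) (Finset.mem_univ x)) d.2)⟩ :
          Fin (k j + 1))))
    intro d e hde
    ext x
    exact congrArg Fin.val (congrFun hde x)
  exact Pi.finite

/-- The orbit equivalence relation. -/
def rel (p q : SymBasis n m k) : Prop :=
  ∃ σ : Equiv.Perm (Fin n), ∀ j, (q j).1 = (p j).1 ∘ σ

def sd (n m : ℕ) (k : Fin m → ℕ) : Setoid (SymBasis n m k) where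
  r := rel
  iseqv := by
    constructor
    · intro p; exact ⟨1, fun j => rfl⟩
    · rintro p q ⟨σ, h⟩
      refine ⟨σ⁻¹, fun j => ?_⟩
      ext x
      have := congrFun (h j) (σ⁻¹ x)
      simp only [Function.comp_apply] at this ⊢
      simp only [Equiv.Perm.inv_def] at this
      simp [this]
    · rintro p q r ⟨σ, h⟩ ⟨τ, h'⟩
      refine ⟨σ * τ, fun j => ?_⟩
      ext x
      have h1 := congrFun (h j) (τ x)
      have h2 := congrFun (h' j) x
      simp only [Function.comp_apply] at h1 h2 ⊢
      simp [h2, h1]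

/-- key permutation extraction lemma -/
lemma exists_perm_of_map_eq {α : Type*} [DecidableEq α] {f g : Fin n → α}
    (h : Finset.univ.val.map f = Finset.univ.val.map g) :
    ∃ σ : Equiv.Perm (Fin n), ∀ x, g (σ x) = f x := by
  have key : ∀ (h : Fin n → α) (a : α),
      Multiset.count a (Finset.univ.val.map h) = Fintype.card {x // h x = a} := by
    intro h a
    rw [Multiset.count_map, Fintype.card_subtype]
    show Multiset.card _ = Multiset.card _
    congr 1
    exact Multiset.filter_congr (fun x _ => eq_comm)
  have hc : ∀ a, Fintype.card {x // f x = a} = Fintype.card {x // g x = a} := by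
    intro a
    rw [← key f a, ← key g a, h]
  exact ⟨Equiv.ofFiberEquiv (fun a => Fintype.equivOfCardEq (hc a)),
    fun x => Equiv.ofFiberEquiv_map _ x⟩

/-- encode a vector as a multiset -/
def colM (d : Fin m → ℕ) : Multiset (Fin m) := ∑ j, Multiset.replicate (d j) j

lemma count_colM (d : Fin m → ℕ) (j : Fin m) : (colM d).count j = d j := by
  unfold colM
  rw [Multiset.count_sum']
  rw [Finset.sum_eq_single j]
  · simp
  · intro b _ hb
    simp [Multiset.count_replicate, hb]
  · simp

lemma colM_inj : Function.Injective (colM (m := m)) := by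
  intro d e h
  funext j
  rw [← count_colM d j, ← count_colM e j, h]

lemma colM_counts (s : Multiset (Fin m)) : colM (fun j => s.count j) = s := by
  ext j
  rw [count_colM]

def cols (p : SymBasis n m k) : Multiset (Multiset (Fin m)) :=
  Finset.univ.val.map (fun x : Fin n => colM (fun j => (p j).1 x))

lemma card_cols (p : SymBasis n m k) : Multiset.card (cols p) = n := by
  simp [cols]

lemma sum_replicate_sum {ι : Type*} [DecidableEq ι] (s : Finset ι) (j : Fin m) (f : ι → ℕ) :
    ∑ x ∈ s, Multiset.replicate (f x) j = Multiset.replicate (∑ x ∈ s, f x) j := by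
  induction s using Finset.induction with
  | empty => simp
  | insert _ _ h ih =>
    rw [Finset.sum_insert h, Finset.sum_insert h, ih, ← Multiset.replicate_add]

lemma sum_cols (p : SymBasis n m k) : (cols p).sum = theMultiset m k := by
  have h0 : (cols p).sum = ∑ x : Fin n, colM (fun j => (p j).1 x) := rfl
  rw [h0]
  unfold colM theMultiset
  rw [Finset.sum_comm]
  apply Finset.sum_congr rfl
  intro j _
  rw [sum_replicate_sum]
  congr 1
  exact (p j).2

def toPart (p : SymBasis n m k) : Multiset (Multiset (Fin m)) :=
  (cols p).filter (fun s => s ≠ 0)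

lemma rel_cols {p q : SymBasis n m k} (h : rel p q) : cols q = cols p := by
  obtain ⟨σ, h⟩ := h
  unfold cols
  have h1 : (fun x : Fin n => colM (fun j => (q j).1 x))
      = (fun x => colM (fun j => (p j).1 x)) ∘ σ := by
    funext x
    simp only [Function.comp_apply]
    congr 1
    funext j
    exact congrFun (h j) x
  rw [h1, ← Multiset.map_map, Multiset.map_univ_val_equiv]

lemma rel_toPart {p q : SymBasis n m k} (h : rel p q) : toPart q = toPart p := by
  unfold toPart
  rw [rel_cols h]

lemma cols_eq (p : SymBasis n m k) :
    cols p = toPart p + Multiset.replicate (n - Multiset.card (toPart p)) 0 := by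
  have h1 := Multiset.filter_add_not (fun s => s ≠ 0) (cols p)
  have hz : ∀ a ∈ (cols p).filter (fun s => ¬ s ≠ 0), a = (0 : Multiset (Fin m)) := by
    intro a ha
    have := Multiset.of_mem_filter ha
    simpa using this
  have hcard : Multiset.card (toPart p)
      + Multiset.card ((cols p).filter (fun s => ¬ s ≠ 0)) = n := by
    rw [← Multiset.card_add]
    rw [show toPart p + (cols p).filter (fun s => ¬ s ≠ 0) = cols p from h1]
    exact card_cols p
  conv_lhs => rw [← h1]
  congr 1
  refine Multiset.eq_replicate.mpr ⟨?_, hz⟩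
  omega

lemma toPart_card_le (p : SymBasis n m k) : Multiset.card (toPart p) ≤ n :=
  le_trans (Multiset.card_le_card (Multiset.filter_le _ _)) (le_of_eq (card_cols p))

lemma toPart_ne (p : SymBasis n m k) : ∀ s ∈ toPart p, s ≠ 0 := by
  intro s hs
  unfold toPart at hs
  exact (Multiset.mem_filter.mp hs).2

lemma toPart_sum (p : SymBasis n m k) : (toPart p).sum = theMultiset m k := by
  have h := congrArg Multiset.sum (cols_eq p)
  rw [sum_cols, Multiset.sum_add, Multiset.sum_replicate, smul_zero, add_zero] at h
  exact h.symm

lemma rel_of_toPart_eq {p q : SymBasis n m k} (h : toPart p = toPart q) : rel p q := by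
  have hcols : cols q = cols p := by
    rw [cols_eq p, cols_eq q, h]
  obtain ⟨σ, hσ⟩ := exists_perm_of_map_eq hcols
  refine ⟨σ, fun j => ?_⟩
  funext x
  have h2 := congrFun (colM_inj (hσ x)) j
  simp only [Function.comp_apply]
  exact h2.symm

lemma toPart_surj (P : Multiset (Multiset (Fin m))) (hne : ∀ s ∈ P, s ≠ 0)
    (hsum : P.sum = theMultiset m k) (hcard : Multiset.card P ≤ n) :
    ∃ p : SymBasis n m k, toPart p = P := by
  classical
  set L : List (Multiset (Fin m)) := P.toList ++ List.replicate (n - Multiset.card P) 0 with hL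
  have hlen : L.length = n := by
    simp only [hL, List.length_append, List.length_replicate, Multiset.length_toList]
    omega
  set F : Fin n → Multiset (Fin m) := fun x => L.get (Fin.cast hlen.symm x) with hF
  have hMS : Finset.univ.val.map F = (L : Multiset (Multiset (Fin m))) := by
    have h1 : (Finset.univ.val : Multiset (Fin n)) = ↑(List.finRange n) := rfl
    rw [h1, Multiset.map_coe]
    congr 1
    rw [← List.ofFn_eq_map, hF, ← List.ofFn_congr hlen L.get]
    exact List.ofFn_get L
  have hLM : (L : Multiset (Multiset (Fin m)))
      = P + Multiset.replicate (n - Multiset.card P) 0 := by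
    rw [hL]
    push_cast [← Multiset.coe_add]
    rfl
  have hsumF : ∀ j, ∑ x : Fin n, (F x).count j = k j := by
    intro j
    rw [← Multiset.count_sum']
    have : ∑ x : Fin n, F x = (L : Multiset (Multiset (Fin m))).sum := by
      rw [← hMS]
      rfl
    rw [this, hLM, Multiset.sum_add, Multiset.sum_replicate, smul_zero, add_zero, hsum]
    exact count_colM k j
  refine ⟨fun j => ⟨fun x => (F x).count j, hsumF j⟩, ?_⟩
  have hcols : cols (fun j => (⟨fun x => (F x).count j, hsumF j⟩ :
      {d : Fin n → ℕ // ∑ x, d x = k j})) = (L : Multiset (Multiset (Fin m))) := by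
    unfold cols
    rw [← hMS]
    congr 1
    funext x
    exact colM_counts (F x)
  unfold toPart
  rw [hcols, hLM, Multiset.filter_add, Multiset.filter_eq_self.mpr hne,
    Multiset.filter_eq_nil.mpr ?_, add_zero]
  intro a ha
  have := Multiset.eq_of_mem_replicate ha
  simp [this]

end Stmt11Aux


/-- For general `n`, the dimension of the space of `S_n`-invariants in
`Sym^{k_1}(V) ⊗ ... ⊗ Sym^{k_m}(V)` equals the number of multiset partitions
of `{1^{k_1}, ..., m^{k_m}}` into at most `n` parts. -/
theorem stmt11 (n m : ℕ) (k : Fin m → ℕ) :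
    Module.finrank ℂ (symInvariants n m k) =
      Nat.card {P : Multiset (Multiset (Fin m)) //
        (∀ p ∈ P, p ≠ 0) ∧ P.sum = theMultiset m k ∧ Multiset.card P ≤ n} := by
  classical
  haveI : Fintype (Quotient (Stmt11Aux.sd n m k)) := Fintype.ofFinite _
  let Φ : (Quotient (Stmt11Aux.sd n m k) → ℂ) →ₗ[ℂ] (SymBasis n m k → ℂ) :=
    { toFun := fun f => fun p => f (Quotient.mk _ p)
      map_add' := fun _ _ => rfl
      map_smul' := fun _ _ => rfl }
  have hinj : Function.Injective Φ := by
    intro f g hfg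
    funext c
    induction c using Quotient.ind with
    | _ p => exact congrFun hfg p
  have hrange : LinearMap.range Φ = symInvariants n m k := by
    apply le_antisymm
    · rintro v ⟨f, rfl⟩
      intro σ p q hq
      show f (Quotient.mk _ q) = f (Quotient.mk _ p)
      congr 1
      exact Quot.sound ((Stmt11Aux.sd n m k).symm ⟨σ, hq⟩)
    · intro v hv
      refine ⟨Quotient.lift v ?_, rfl⟩
      rintro p q ⟨σ, h⟩
      exact (hv σ p q h).symm
  have h1 : Module.finrank ℂ (symInvariants n m k)
      = Nat.card (Quotient (Stmt11Aux.sd n m k)) := by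
    rw [← hrange, LinearMap.finrank_range_of_inj hinj,
      Module.finrank_fintype_fun_eq_card, Nat.card_eq_fintype_card]
  rw [h1]
  apply Nat.card_eq_of_bijective
    (Quotient.lift (fun p => (⟨Stmt11Aux.toPart p,
      Stmt11Aux.toPart_ne p, Stmt11Aux.toPart_sum p, Stmt11Aux.toPart_card_le p⟩ :
      {P : Multiset (Multiset (Fin m)) //
        (∀ p ∈ P, p ≠ 0) ∧ P.sum = theMultiset m k ∧ Multiset.card P ≤ n}))
      (fun p q hpq => Subtype.ext (Stmt11Aux.rel_toPart hpq).symm))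
  constructor
  · intro a b
    induction a using Quotient.ind with
    | _ p =>
    induction b using Quotient.ind with
    | _ q =>
    intro hab
    exact Quot.sound (Stmt11Aux.rel_of_toPart_eq (congrArg Subtype.val hab))
  · rintro ⟨P, h1, h2, h3⟩
    obtain ⟨p, hp⟩ := Stmt11Aux.toPart_surj P h1 h2 h3
    exact ⟨Quotient.mk _ p, Subtype.ext hp⟩
end
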